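/- Let Q, ξ : ℝ → ℝ be differentiable with ξ(t) > 0 for all t, and let θ, p_ψ, λ_ψ : ℝ → ℝ. If Q'(t) = −3(p_ψ(t) + λ_ψ(t))/ξ(t), Q(t)θ(t) = 9p_ψ(t)/ξ(t), and ξ'(t)/ξ(t) = θ(t)/3 for all t, then p_ψ = (1/3)Q·ξ' and λ_ψ = −(1/3)(Q·ξ)'. -/

import Mathlib

/-- from the field equations Q' = −3(p_ψ + λ_ψ)/ξ,
Qθ = 9p_ψ/ξ and the CKV kinematics ξ'/ξ = θ/3 it follows that
p_ψ = (1/3)Qξ' and λ_ψ = −(1/3)(Qξ)'. -/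
theorem stmt_18 (Q ξ θ pψ lψ : ℝ → ℝ)
    (hQ : Differentiable ℝ Q) (hξ : Differentiable ℝ ξ)
    (hξpos : ∀ t, 0 < ξ t)
    (h1 : ∀ t, deriv Q t = -(3 * (pψ t + lψ t) / ξ t))
    (h2 : ∀ t, Q t * θ t = 9 * pψ t / ξ t)
    (h3 : ∀ t, deriv ξ t / ξ t = θ t / 3) :
    ∀ t, pψ t = (1/3) * Q t * deriv ξ t ∧
      lψ t = -(1/3) * deriv (fun s => Q s * ξ s) t := by
  intro t
  have hne : ξ t ≠ 0 := (hξpos t).ne'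
  have hθ : θ t = 3 * deriv ξ t / ξ t := by
    have := h3 t; field_simp at this ⊢; linarith
  have hp : pψ t = (1/3) * Q t * deriv ξ t := by
    have h2t := h2 t
    rw [hθ] at h2t
    field_simp at h2t
    linarith
  refine ⟨hp, ?_⟩
  have hd : deriv (fun s => Q s * ξ s) t = deriv Q t * ξ t + Q t * deriv ξ t := by
    rw [deriv_fun_mul (hQ t) (hξ t)]
  rw [hd, h1 t]
  field_simp
  linear_combination -3 * hp
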